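/- For all complex numbers x, y with x ≠ 0, y ≠ 0 and x + y ≠ 0, one has R̄₁₂(x+y) R̄₁₃(x) R₂₃(y) = R₂₃(y) R̄₁₃(x) R̄₁₂(x+y) as operators on (ℂⁿ)^{⊗3}. -/

import Mathlib

noncomputable section
open scoped Kronecker
open Matrix

/-- Square matrices acting on the tensor power `(ℂⁿ)^{⊗ι}`, modelled on the
function basis `ι → Fin n`. -/
abbrev TMat (ι : Type) (n : ℕ) := Matrix (ι → Fin n) (ι → Fin n) ℂ

/-- The matrix units `E_{ij}` of `End(ℂⁿ)`. -/
def matE (n : ℕ) (i j : Fin n) : Matrix (Fin n) (Fin n) ℂ := Matrix.single i j 1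

/-- The flip `P = Σ E_{ij} ⊗ E_{ji}` on `ℂⁿ ⊗ ℂⁿ`. -/
def flipP (n : ℕ) : Matrix (Fin n × Fin n) (Fin n × Fin n) ℂ :=
  ∑ i : Fin n, ∑ j : Fin n, matE n i j ⊗ₖ matE n j i

/-- `P̄ = Σ E_{ij} ⊗ E_{ij}` on `ℂⁿ ⊗ ℂⁿ`. -/
def PbarM (n : ℕ) : Matrix (Fin n × Fin n) (Fin n × Fin n) ℂ :=
  ∑ i : Fin n, ∑ j : Fin n, matE n i j ⊗ₖ matE n i j

/-- The conjugate `X̃ = G⁻¹ Xᵀ G` of `X` relative to the bilinear form with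
Gram matrix `G`, i.e. `⟨X u, v⟩ = ⟨u, X̃ v⟩` where `⟨u, v⟩ = uᵀ G v`. -/
def conjF {n : ℕ} (G X : Matrix (Fin n) (Fin n) ℂ) : Matrix (Fin n) (Fin n) ℂ :=
  G⁻¹ * Xᵀ * G

/-- `P̃ = Σ Ẽ_{ij} ⊗ E_{ji}`. -/
def PtilM (n : ℕ) (G : Matrix (Fin n) (Fin n) ℂ) : Matrix (Fin n × Fin n) (Fin n × Fin n) ℂ :=
  ∑ i : Fin n, ∑ j : Fin n, conjF G (matE n i j) ⊗ₖ matE n j i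

/-- `P̂ = Σ Ẽ_{ij} ⊗ E_{ij}`. -/
def PhatM (n : ℕ) (G : Matrix (Fin n) (Fin n) ℂ) : Matrix (Fin n × Fin n) (Fin n × Fin n) ℂ :=
  ∑ i : Fin n, ∑ j : Fin n, conjF G (matE n i j) ⊗ₖ matE n i j

/-- The Yang R-matrix `R(x) = 1 − P x⁻¹`. -/
def Rm (n : ℕ) (x : ℂ) : Matrix (Fin n × Fin n) (Fin n × Fin n) ℂ := 1 - x⁻¹ • flipP n

/-- `R̄(x) = 1 − P̄ x⁻¹`. -/
def RbarM (n : ℕ) (x : ℂ) : Matrix (Fin n × Fin n) (Fin n × Fin n) ℂ := 1 - x⁻¹ • PbarM n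

/-- `R̃(x) = 1 − P̃ x⁻¹`. -/
def RtilM (n : ℕ) (G : Matrix (Fin n) (Fin n) ℂ) (x : ℂ) :
    Matrix (Fin n × Fin n) (Fin n × Fin n) ℂ := 1 - x⁻¹ • PtilM n G

/-- `R̂(x) = 1 − P̂ x⁻¹`. -/
def RhatM (n : ℕ) (G : Matrix (Fin n) (Fin n) ℂ) (x : ℂ) :
    Matrix (Fin n × Fin n) (Fin n × Fin n) ℂ := 1 - x⁻¹ • PhatM n G

/-- `Z_{ij}` : the operator on a tensor power of `ℂⁿ` acting as the two-factor
operator `Z` in the `i`-th and `j`-th tensor factors and as the identity elsewhere. -/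
def lift2 {n : ℕ} {ι : Type} [Fintype ι] [DecidableEq ι] (i j : ι)
    (Z : Matrix (Fin n × Fin n) (Fin n × Fin n) ℂ) : TMat ι n :=
  fun f g => Z (f i, f j) (g i, g j) *
    ∏ p : ι, if p = i ∨ p = j then 1 else (if f p = g p then 1 else 0)

/-! ### Auxiliary machinery -/

lemma PbarM_apply (n : ℕ) (a b c d : Fin n) :
    PbarM n (a,b) (c,d) = if a = b ∧ c = d then 1 else 0 := by
  simp [PbarM, matE, Matrix.sum_apply, Matrix.kroneckerMap_apply, Matrix.single,
    ite_and, Finset.sum_ite_eq, Finset.sum_ite_eq']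
  all_goals aesop

lemma flipP_apply (n : ℕ) (a b c d : Fin n) :
    flipP n (a,b) (c,d) = if a = d ∧ b = c then 1 else 0 := by
  simp [flipP, matE, Matrix.sum_apply, Matrix.kroneckerMap_apply, Matrix.single,
    ite_and, Finset.sum_ite_eq, Finset.sum_ite_eq']
  all_goals aesop

def e3 {n : ℕ} : (Fin n × Fin n × Fin n) ≃ (Fin 3 → Fin n) where
  toFun p := ![p.1, p.2.1, p.2.2]
  invFun h := (h 0, h 1, h 2)
  left_inv p := rfl
  right_inv h := by funext i; fin_cases i <;> rfl

lemma sum_fn3 {n : ℕ} (F : (Fin 3 → Fin n) → ℂ) :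
    ∑ h : Fin 3 → Fin n, F h = ∑ a : Fin n, ∑ b : Fin n, ∑ c : Fin n, F ![a,b,c] := by
  rw [← Equiv.sum_comp (e3 (n := n)) F]
  simp [e3, Fintype.sum_prod_type]
  rfl

lemma funext3 {α : Type*} (f g : Fin 3 → α) :
    f = g ↔ f 0 = g 0 ∧ f 1 = g 1 ∧ f 2 = g 2 := by
  constructor
  · rintro rfl; exact ⟨rfl, rfl, rfl⟩
  · rintro ⟨h0, h1, h2⟩; funext i; fin_cases i <;> assumption

def Am (n : ℕ) : TMat (Fin 3) n := lift2 0 1 (PbarM n)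
def Bm (n : ℕ) : TMat (Fin 3) n := lift2 0 2 (PbarM n)
def Cm (n : ℕ) : TMat (Fin 3) n := lift2 1 2 (flipP n)

lemma Am_apply {n : ℕ} (f g : Fin 3 → Fin n) :
    Am n f g = if f 0 = f 1 ∧ g 0 = g 1 ∧ f 2 = g 2 then 1 else 0 := by
  simp [Am, lift2, Fin.prod_univ_three, PbarM_apply, ite_and, mul_ite, ite_mul]
  split_ifs <;> rfl

lemma Bm_apply {n : ℕ} (f g : Fin 3 → Fin n) :
    Bm n f g = if f 0 = f 2 ∧ g 0 = g 2 ∧ f 1 = g 1 then 1 else 0 := by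
  simp [Bm, lift2, Fin.prod_univ_three, PbarM_apply, ite_and, mul_ite, ite_mul]
  split_ifs <;> rfl

lemma Cm_apply {n : ℕ} (f g : Fin 3 → Fin n) :
    Cm n f g = if f 1 = g 2 ∧ f 2 = g 1 ∧ f 0 = g 0 then 1 else 0 := by
  simp [Cm, lift2, Fin.prod_univ_three, flipP_apply, ite_and, mul_ite, ite_mul]
  split_ifs <;> rfl

/-- `A·B` as an explicit matrix. -/
def ABf (n : ℕ) : TMat (Fin 3) n :=
  fun f g => if f 0 = f 1 ∧ g 0 = g 2 ∧ g 1 = f 2 then 1 else 0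

/-- `B·A` as an explicit matrix. -/
def BAf (n : ℕ) : TMat (Fin 3) n :=
  fun f g => if f 0 = f 2 ∧ g 0 = g 1 ∧ f 1 = g 2 then 1 else 0

lemma AmBm {n : ℕ} : Am n * Bm n = ABf n := by
  ext f g
  rw [Matrix.mul_apply, sum_fn3]
  simp only [Am_apply, Bm_apply, ABf, Matrix.cons_val_zero, Matrix.cons_val_one,
    Matrix.head_cons, Matrix.cons_val_two, Matrix.tail_cons, ite_and, mul_ite, ite_mul,
    one_mul, mul_one, zero_mul, mul_zero]
  simp [Finset.sum_ite_eq, Finset.sum_ite_eq', eq_comm]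
  all_goals aesop

lemma AmCm {n : ℕ} : Am n * Cm n = ABf n := by
  ext f g
  rw [Matrix.mul_apply, sum_fn3]
  simp only [Am_apply, Cm_apply, ABf, Matrix.cons_val_zero, Matrix.cons_val_one,
    Matrix.head_cons, Matrix.cons_val_two, Matrix.tail_cons, ite_and, mul_ite, ite_mul,
    one_mul, mul_one, zero_mul, mul_zero]
  simp [Finset.sum_ite_eq, Finset.sum_ite_eq', eq_comm]
  all_goals aesop

lemma CmBm {n : ℕ} : Cm n * Bm n = ABf n := by
  ext f g
  rw [Matrix.mul_apply, sum_fn3]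
  simp only [Cm_apply, Bm_apply, ABf, Matrix.cons_val_zero, Matrix.cons_val_one,
    Matrix.head_cons, Matrix.cons_val_two, Matrix.tail_cons, ite_and, mul_ite, ite_mul,
    one_mul, mul_one, zero_mul, mul_zero]
  simp [Finset.sum_ite_eq, Finset.sum_ite_eq', eq_comm]
  all_goals aesop

lemma BmAm {n : ℕ} : Bm n * Am n = BAf n := by
  ext f g
  rw [Matrix.mul_apply, sum_fn3]
  simp only [Bm_apply, Am_apply, BAf, Matrix.cons_val_zero, Matrix.cons_val_one,
    Matrix.head_cons, Matrix.cons_val_two, Matrix.tail_cons, ite_and, mul_ite, ite_mul,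
    one_mul, mul_one, zero_mul, mul_zero]
  simp [Finset.sum_ite_eq, Finset.sum_ite_eq', eq_comm]
  all_goals aesop

lemma BmCm {n : ℕ} : Bm n * Cm n = BAf n := by
  ext f g
  rw [Matrix.mul_apply, sum_fn3]
  simp only [Bm_apply, Cm_apply, BAf, Matrix.cons_val_zero, Matrix.cons_val_one,
    Matrix.head_cons, Matrix.cons_val_two, Matrix.tail_cons, ite_and, mul_ite, ite_mul,
    one_mul, mul_one, zero_mul, mul_zero]
  simp [Finset.sum_ite_eq, Finset.sum_ite_eq', eq_comm]
  all_goals aesop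

lemma CmAm {n : ℕ} : Cm n * Am n = BAf n := by
  ext f g
  rw [Matrix.mul_apply, sum_fn3]
  simp only [Cm_apply, Am_apply, BAf, Matrix.cons_val_zero, Matrix.cons_val_one,
    Matrix.head_cons, Matrix.cons_val_two, Matrix.tail_cons, ite_and, mul_ite, ite_mul,
    one_mul, mul_one, zero_mul, mul_zero]
  simp [Finset.sum_ite_eq, Finset.sum_ite_eq', eq_comm]
  all_goals aesop

lemma ABfCm {n : ℕ} : ABf n * Cm n = Am n := by
  ext f g
  rw [Matrix.mul_apply, sum_fn3]
  simp only [ABf, Cm_apply, Am_apply, Matrix.cons_val_zero, Matrix.cons_val_one,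
    Matrix.head_cons, Matrix.cons_val_two, Matrix.tail_cons, ite_and, mul_ite, ite_mul,
    one_mul, mul_one, zero_mul, mul_zero]
  simp [Finset.sum_ite_eq, Finset.sum_ite_eq', eq_comm]
  all_goals aesop

lemma ABfAm {n : ℕ} : ABf n * Am n = Am n := by
  ext f g
  rw [Matrix.mul_apply, sum_fn3]
  simp only [ABf, Am_apply, Matrix.cons_val_zero, Matrix.cons_val_one,
    Matrix.head_cons, Matrix.cons_val_two, Matrix.tail_cons, ite_and, mul_ite, ite_mul,
    one_mul, mul_one, zero_mul, mul_zero]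
  simp [Finset.sum_ite_eq, Finset.sum_ite_eq', eq_comm]
  all_goals aesop

lemma lift_RbarM_01 {n : ℕ} (s : ℂ) :
    lift2 (0 : Fin 3) 1 (RbarM n s) = 1 - s⁻¹ • Am n := by
  ext f g
  simp only [lift2, Fin.prod_univ_three, RbarM, Matrix.sub_apply, Matrix.smul_apply,
    Matrix.one_apply, Am_apply, PbarM_apply, Prod.mk.injEq, funext3, smul_eq_mul]
  simp only [ite_and, mul_ite, ite_mul, one_mul, mul_one, zero_mul, mul_zero, sub_mul]
  split_ifs <;> simp_all <;> ring

lemma lift_RbarM_02 {n : ℕ} (s : ℂ) :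
    lift2 (0 : Fin 3) 2 (RbarM n s) = 1 - s⁻¹ • Bm n := by
  ext f g
  simp only [lift2, Fin.prod_univ_three, RbarM, Matrix.sub_apply, Matrix.smul_apply,
    Matrix.one_apply, Bm_apply, PbarM_apply, Prod.mk.injEq, funext3, smul_eq_mul]
  simp only [ite_and, mul_ite, ite_mul, one_mul, mul_one, zero_mul, mul_zero, sub_mul]
  split_ifs <;> simp_all <;> ring

lemma lift_Rm_12 {n : ℕ} (s : ℂ) :
    lift2 (1 : Fin 3) 2 (Rm n s) = 1 - s⁻¹ • Cm n := by
  ext f g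
  simp only [lift2, Fin.prod_univ_three, Rm, Matrix.sub_apply, Matrix.smul_apply,
    Matrix.one_apply, Cm_apply, flipP_apply, Prod.mk.injEq, funext3, smul_eq_mul]
  simp only [ite_and, mul_ite, ite_mul, one_mul, mul_one, zero_mul, mul_zero, sub_mul]
  split_ifs <;> simp_all <;> ring

/-- `R̄₁₂(x+y) R̄₁₃(x) R₂₃(y) = R₂₃(y) R̄₁₃(x) R̄₁₂(x+y)` on `(ℂⁿ)^{⊗3}`. -/
theorem stmt1 (n : ℕ) (hn : 1 ≤ n) (x y : ℂ) (hx : x ≠ 0) (hy : y ≠ 0) (hxy : x + y ≠ 0) :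
    lift2 (0 : Fin 3) 1 (RbarM n (x + y)) * lift2 (0 : Fin 3) 2 (RbarM n x) *
      lift2 (1 : Fin 3) 2 (Rm n y)
  = lift2 (1 : Fin 3) 2 (Rm n y) * lift2 (0 : Fin 3) 2 (RbarM n x) *
      lift2 (0 : Fin 3) 1 (RbarM n (x + y)) := by
  rw [lift_RbarM_01, lift_RbarM_02, lift_Rm_12]
  have key : x⁻¹ * (x + y)⁻¹ + (x + y)⁻¹ * y⁻¹ = x⁻¹ * y⁻¹ := by
    field_simp
    ring
  simp only [sub_mul, mul_sub, one_mul, mul_one, Matrix.smul_mul, Matrix.mul_smul,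
    smul_smul, AmBm, AmCm, CmBm, BmAm, BmCm, CmAm, ABfCm, ABfAm]
  match_scalars <;> field_simp <;> ring
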